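/- The Hilbert transform of x ↦ sin(mx)/x (for m > 0) is x ↦ (cos(mx) − 1)/x, where the Hilbert transform is defined as (ℋf)(y) = (1/π) PV ∫ f(x)/(x − y) dx. -/

import Mathlib

set_option maxHeartbeats 1000000

open MeasureTheory Filter Topology
open Set intervalIntegral
open Real hiding sinc abs_sinc_le_one sinc_neg measurable_sinc
open scoped FourierTransform

noncomputable def sinc (x : ℝ) : ℝ := Real.sin x / x

lemma abs_sinc_le_one (x : ℝ) : |sinc x| ≤ 1 := by
  unfold sinc
  rcases eq_or_ne x 0 with h | h
  · simp [h]
  · rw [abs_div, div_le_one (abs_pos.mpr h)]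
    exact Real.abs_sin_le_abs

lemma measurable_sinc : Measurable sinc := Real.measurable_sin.div measurable_id

lemma intervalIntegrable_sinc (a b : ℝ) : IntervalIntegrable sinc volume a b := by
  rw [intervalIntegrable_iff]
  apply Measure.integrableOn_of_bounded (M := 1)
  · rw [Set.uIoc]; exact measure_Ioc_lt_top.ne
  · exact measurable_sinc.aestronglyMeasurable
  · exact ae_of_all _ fun x => by simpa using abs_sinc_le_one x

noncomputable def Si (t : ℝ) : ℝ := ∫ x in (0:ℝ)..t, sinc x

lemma Si_zero : Si 0 = 0 := integral_same

lemma continuous_Si : Continuous Si :=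
  intervalIntegral.continuous_primitive (fun a b => intervalIntegrable_sinc a b) 0

lemma sinc_neg (x : ℝ) : sinc (-x) = sinc x := by
  unfold sinc; rw [Real.sin_neg, neg_div_neg_eq]

lemma Si_neg (t : ℝ) : Si (-t) = - Si t := by
  have h : Si t = ∫ x in (0:ℝ)..t, sinc (-x) := by
    unfold Si; congr 1; funext x; rw [sinc_neg]
  rw [h, intervalIntegral.integral_comp_neg sinc]
  rw [Si, ← intervalIntegral.integral_symm]
  simp

lemma integral_sinc_eq (a b : ℝ) : ∫ x in a..b, sinc x = Si b - Si a := by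
  rw [Si, Si, intervalIntegral.integral_interval_sub_left
    (intervalIntegrable_sinc 0 b) (intervalIntegrable_sinc 0 a)]

lemma abs_sin_nat_mul_le (n : ℕ) (x : ℝ) : |Real.sin (n * x)| ≤ n * |Real.sin x| := by
  induction n with
  | zero => simp
  | succ n ih =>
    have h : ((n:ℝ)+1) * x = n*x + x := by ring
    push_cast
    rw [h, Real.sin_add]
    calc |Real.sin (n*x) * Real.cos x + Real.cos (n*x) * Real.sin x|
        ≤ |Real.sin (n*x) * Real.cos x| + |Real.cos (n*x) * Real.sin x| := abs_add_le _ _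
      _ ≤ |Real.sin (n*x)| * 1 + 1 * |Real.sin x| := by
          rw [abs_mul, abs_mul]
          gcongr
          · exact Real.abs_cos_le_one x
          · exact Real.abs_cos_le_one _
      _ ≤ (n:ℝ) * |Real.sin x| + 1 * |Real.sin x| := by
          rw [mul_one]; gcongr
      _ = ((n:ℝ)+1) * |Real.sin x| := by ring

lemma intervalIntegrable_kernel (c : ℝ) (a b : ℝ) (hc : 0 ≤ c) (hn : ∃ n : ℕ, c = n) :
    IntervalIntegrable (fun t => Real.sin (c * t) / Real.sin t) volume a b := by
  obtain ⟨n, rfl⟩ := hn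
  rw [intervalIntegrable_iff]
  apply Measure.integrableOn_of_bounded (M := n)
  · rw [Set.uIoc]; exact measure_Ioc_lt_top.ne
  · exact (Real.measurable_sin.comp (measurable_const.mul measurable_id)).div
      Real.measurable_sin |>.aestronglyMeasurable
  · refine ae_of_all _ fun t => ?_
    simp only [Real.norm_eq_abs, abs_div]
    rcases eq_or_ne (Real.sin t) 0 with h | h
    · simp [h]
    · rw [div_le_iff₀ (abs_pos.mpr h)]
      exact abs_sin_nat_mul_le n t

lemma dirichlet_kernel_integral (n : ℕ) :
    ∫ t in (0:ℝ)..(Real.pi/2), Real.sin ((2*n+1) * t) / Real.sin t = Real.pi / 2 := by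
  induction n with
  | zero =>
    have : ∫ t in (0:ℝ)..(Real.pi/2), Real.sin ((2*(0:ℕ)+1) * t) / Real.sin t
        = ∫ t in (0:ℝ)..(Real.pi/2), (1:ℝ) := by
      apply intervalIntegral.integral_congr_ae
      refine ae_of_all _ fun t ht => ?_
      rw [Set.uIoc_of_le (by positivity)] at ht
      have hs : Real.sin t ≠ 0 := by
        have := Real.sin_pos_of_pos_of_lt_pi ht.1 (lt_of_le_of_lt ht.2 (by linarith [Real.pi_pos]))
        linarith
      push_cast
      norm_num
      exact hs
    rw [this]
    simp
  | succ n ih =>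
    have key : ∫ t in (0:ℝ)..(Real.pi/2),
        (Real.sin ((2*(n+1)+1) * t) / Real.sin t - Real.sin ((2*n+1) * t) / Real.sin t)
        = ∫ t in (0:ℝ)..(Real.pi/2), 2 * Real.cos ((2*n+2) * t) := by
      apply intervalIntegral.integral_congr_ae
      refine ae_of_all _ fun t ht => ?_
      rw [Set.uIoc_of_le (by positivity)] at ht
      have hs : Real.sin t ≠ 0 := by
        have := Real.sin_pos_of_pos_of_lt_pi ht.1 (lt_of_le_of_lt ht.2 (by linarith [Real.pi_pos]))
        linarith
      have e1 : ((2*((n:ℝ)+1)+1)) * t = (2*n+2)*t + t := by ring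
      have e2 : ((2*(n:ℝ)+1)) * t = (2*n+2)*t - t := by ring
      push_cast
      rw [e1, e2, Real.sin_add, Real.sin_sub]
      field_simp
      ring
    have hcos : ∫ t in (0:ℝ)..(Real.pi/2), 2 * Real.cos ((2*n+2) * t) = 0 := by
      rw [intervalIntegral.integral_const_mul]
      have hc : ((2:ℝ)*n+2) ≠ 0 := by positivity
      rw [intervalIntegral.integral_comp_mul_left Real.cos hc]
      simp only [mul_zero, smul_eq_mul]
      rw [integral_cos]
      have : (2*(n:ℝ)+2) * (Real.pi/2) = (n+1) * Real.pi := by ring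
      rw [this]
      have : Real.sin ((↑(n+1) : ℝ) * Real.pi) = 0 := Real.sin_nat_mul_pi (n+1)
      push_cast at this
      rw [this]
      simp
    have hi1 : IntervalIntegrable (fun t => Real.sin ((2*(n+1)+1) * t) / Real.sin t)
        volume 0 (Real.pi/2) := by
      apply intervalIntegrable_kernel _ _ _ (by positivity)
      exact ⟨2*(n+1)+1, by push_cast; ring⟩
    have hi2 : IntervalIntegrable (fun t => Real.sin ((2*n+1) * t) / Real.sin t)
        volume 0 (Real.pi/2) := by
      apply intervalIntegrable_kernel _ _ _ (by positivity)
      exact ⟨2*n+1, by push_cast; ring⟩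
    have := intervalIntegral.integral_sub hi1 hi2
    rw [key, hcos] at this
    push_cast at this ih ⊢
    linarith [this, ih]

lemma tendsto_integral_mul_sin {g : ℝ → ℝ} (hg : Integrable g volume) :
    Tendsto (fun lam : ℝ => ∫ t : ℝ, g t * Real.sin (lam * t)) atTop (𝓝 0) := by
  set f : ℝ → ℂ := fun t => (g t : ℂ) with hf
  have hfi : Integrable f volume := hg.ofReal
  have h2 : Tendsto (𝓕 f) atTop (𝓝 0) :=
    (Real.zero_at_infty_fourier f).mono_left
      (by rw [cocompact_eq_atBot_atTop]; exact le_sup_right)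
  have h3 : Tendsto (fun w : ℝ => -(𝓕 f w).im) atTop (𝓝 0) := by
    have := (Complex.continuous_im.tendsto 0).comp h2
    simpa using this.neg
  have key : ∀ w : ℝ, ∫ t : ℝ, g t * Real.sin (2*π*w*t) = -(𝓕 f w).im := by
    intro w
    have hInt : Integrable (fun v : ℝ => Complex.exp (↑(-2*π*v*w) * Complex.I) * f v) volume := by
      apply hfi.bdd_mul (c := 1)
      · apply Continuous.aestronglyMeasurable
        exact Complex.continuous_exp.comp ((Complex.continuous_ofReal.comp
          (by continuity)).mul continuous_const)
      · refine ae_of_all _ fun x => ?_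
        rw [Complex.norm_exp_ofReal_mul_I]
    rw [Real.fourier_real_eq_integral_exp_smul]
    simp_rw [smul_eq_mul]
    have him : ∫ v : ℝ, (Complex.exp (↑(-2*π*v*w) * Complex.I) * f v).im
        = (∫ v : ℝ, Complex.exp (↑(-2*π*v*w) * Complex.I) * f v).im := by
      have := ContinuousLinearMap.integral_comp_comm Complex.imCLM hInt
      simpa using this
    rw [← him, ← MeasureTheory.integral_neg]
    congr 1
    funext t
    simp only [hf, Complex.mul_im, Complex.exp_ofReal_mul_I_im, Complex.exp_ofReal_mul_I_re,
      Complex.ofReal_im, Complex.ofReal_re, mul_zero, zero_add, add_zero]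
    have e : (-2) * π * t * w = -(2*π*w*t) := by ring
    rw [e, Real.sin_neg]
    ring
  have h4 : Tendsto (fun lam : ℝ => lam / (2*π)) atTop atTop :=
    tendsto_id.atTop_div_const (by positivity)
  have h5 := h3.comp h4
  apply h5.congr
  intro lam
  simp only [Function.comp]
  rw [← key (lam/(2*π))]
  congr 1
  funext t
  congr 2
  have hπ : (2:ℝ)*π ≠ 0 := by positivity
  field_simp

lemma tendsto_intervalIntegral_mul_sin {h : ℝ → ℝ} (hi : IntegrableOn h (Ioc 0 (π/2)) volume) :
    Tendsto (fun lam : ℝ => ∫ t in (0:ℝ)..(π/2), h t * Real.sin (lam * t)) atTop (𝓝 0) := by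
  have hg : Integrable ((Ioc (0:ℝ) (π/2)).indicator h) volume :=
    (integrable_indicator_iff measurableSet_Ioc).mpr hi
  apply (tendsto_integral_mul_sin hg).congr
  intro lam
  rw [intervalIntegral.integral_of_le (by positivity), ← MeasureTheory.integral_indicator measurableSet_Ioc]
  congr 1
  funext t
  by_cases ht : t ∈ Ioc (0:ℝ) (π/2) <;> simp [Set.indicator, ht]

lemma sin_pos_Ioc {t : ℝ} (ht : t ∈ Ioc (0:ℝ) (π/2)) : 0 < Real.sin t :=
  Real.sin_pos_of_pos_of_lt_pi ht.1 (lt_of_le_of_lt ht.2 (by linarith [Real.pi_pos]))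

lemma hfun_bound {t : ℝ} (ht : t ∈ Ioc (0:ℝ) (π/2)) : |1/Real.sin t - 1/t| ≤ 2 := by
  have hs := sin_pos_Ioc ht
  have ht0 := ht.1
  have hsle : Real.sin t ≤ t := Real.sin_le ht0.le
  have h1t : 1/t ≤ 1/Real.sin t := by
    apply one_div_le_one_div_of_le hs hsle
  rw [abs_of_nonneg (by linarith)]
  rcases le_or_gt t 1 with hle | hgt
  · have hcube := Real.sin_gt_sub_cube ht0
    have ht2 : t^2 ≤ 1 := by nlinarith
    have ht3 : t^3 ≤ t := by nlinarith [mul_le_mul_of_nonneg_left ht2 ht0.le]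
    have hs34 : (3/4) * t < Real.sin t := by nlinarith
    rw [div_sub_div _ _ hs.ne' (ne_of_gt ht0), div_le_iff₀ (by positivity)]
    nlinarith [hcube, mul_lt_mul_of_pos_right hs34 ht0, mul_le_of_le_one_right (sq_nonneg t) hle]
  · have h1pi : (1:ℝ) ≤ π/2 := by linarith [Real.pi_gt_three]
    have hmono : Real.sin 1 ≤ Real.sin t := by
      apply Real.strictMonoOn_sin.monotoneOn ?_ ?_ hgt.le
      · constructor <;> [linarith [Real.pi_pos]; exact h1pi]
      · constructor <;> [linarith [Real.pi_pos]; exact ht.2]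
    have hsin1 : (3/4 : ℝ) < Real.sin 1 := by
      have := Real.sin_gt_sub_cube one_pos
      norm_num at this
      linarith
    have h34 : 1/Real.sin t ≤ 1/(3/4 : ℝ) := by
      apply one_div_le_one_div_of_le (by norm_num)
      linarith
    have h43 : 1/Real.sin t ≤ 4/3 := by
      rw [show (4:ℝ)/3 = 1/(3/4) by norm_num]
      exact h34
    have h1tpos : 0 < 1/t := by positivity
    linarith

lemma hfun_integrableOn : IntegrableOn (fun t => 1/Real.sin t - 1/t) (Ioc 0 (π/2)) volume := by
  apply Measure.integrableOn_of_bounded (M := 2)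
  · exact measure_Ioc_lt_top.ne
  · exact ((measurable_const.div Real.measurable_sin).sub
      (measurable_const.div measurable_id)).aestronglyMeasurable
  · rw [ae_restrict_iff' measurableSet_Ioc]
    exact ae_of_all _ fun t ht => by simpa using hfun_bound ht

lemma intervalIntegrable_hsin (lam : ℝ) :
    IntervalIntegrable (fun t => (1/Real.sin t - 1/t) * Real.sin (lam * t)) volume 0 (π/2) := by
  rw [intervalIntegrable_iff, Set.uIoc_of_le (by positivity)]
  apply Measure.integrableOn_of_bounded (M := 2)
  · exact measure_Ioc_lt_top.ne
  · exact (((measurable_const.div Real.measurable_sin).sub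
      (measurable_const.div measurable_id)).mul
      (Real.measurable_sin.comp (measurable_const.mul measurable_id))).aestronglyMeasurable
  · rw [ae_restrict_iff' measurableSet_Ioc]
    refine ae_of_all _ fun t ht => ?_
    rw [Real.norm_eq_abs, abs_mul]
    calc |1/Real.sin t - 1/t| * |Real.sin (lam*t)| ≤ 2 * 1 := by
          apply mul_le_mul (hfun_bound ht) (Real.abs_sin_le_one _) (abs_nonneg _) (by norm_num)
      _ = 2 := by norm_num

lemma Si_odd (n : ℕ) : Si ((2*n+1) * (π/2)) =
    π/2 - ∫ t in (0:ℝ)..(π/2), (1/Real.sin t - 1/t) * Real.sin ((2*n+1) * t) := by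
  set lam : ℝ := (2*n+1 : ℝ) with hlam
  have hl : (0:ℝ) < lam := by positivity
  -- Step 1 : Si (lam * π/2) = ∫ t in 0..π/2, sin (lam t) / t
  have step1 : Si (lam * (π/2)) = ∫ t in (0:ℝ)..(π/2), Real.sin (lam*t)/t := by
    have e : ∀ t : ℝ, Real.sin (lam*t)/t = lam * sinc (lam*t) := by
      intro t
      rcases eq_or_ne t 0 with h | h
      · simp [h, sinc]
      · unfold sinc; field_simp
    rw [show (∫ t in (0:ℝ)..(π/2), Real.sin (lam*t)/t)
        = ∫ t in (0:ℝ)..(π/2), lam * sinc (lam*t) by exact intervalIntegral.integral_congr fun t _ => e t]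
    rw [intervalIntegral.integral_const_mul, intervalIntegral.integral_comp_mul_left sinc hl.ne']
    rw [mul_zero, smul_eq_mul, integral_sinc_eq]
    have : Si 0 = 0 := intervalIntegral.integral_same
    rw [this]
    field_simp; simp
  -- Step 2 : pointwise decomposition
  have step2 : (∫ t in (0:ℝ)..(π/2), Real.sin (lam*t)/t)
      = (∫ t in (0:ℝ)..(π/2), Real.sin (lam*t)/Real.sin t)
        - ∫ t in (0:ℝ)..(π/2), (1/Real.sin t - 1/t) * Real.sin (lam * t) := by
    rw [← intervalIntegral.integral_sub (intervalIntegrable_kernel lam 0 (π/2) hl.le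
      ⟨2*n+1, by push_cast; ring⟩) (intervalIntegrable_hsin lam)]
    apply intervalIntegral.integral_congr_ae
    refine ae_of_all _ fun t ht => ?_
    rw [Set.uIoc_of_le (by positivity)] at ht
    have hs := (sin_pos_Ioc ht).ne'
    have ht0 := ht.1.ne'
    field_simp
    ring
  rw [step1, step2, dirichlet_kernel_integral n]

lemma tendsto_Si_odd : Tendsto (fun n : ℕ => Si ((2*n+1) * (π/2))) atTop (𝓝 (π/2)) := by
  have hseq : Tendsto (fun n : ℕ => ((2*n+1 : ℝ))) atTop atTop := by
    apply Filter.tendsto_atTop_add_const_right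
    apply Filter.Tendsto.const_mul_atTop (by norm_num : (0:ℝ) < 2)
    exact tendsto_natCast_atTop_atTop
  have hRL := (tendsto_intervalIntegral_mul_sin hfun_integrableOn).comp hseq
  have h : Tendsto (fun n : ℕ => π/2 -
      ((fun lam : ℝ => ∫ t in (0:ℝ)..(π/2), (1/Real.sin t - 1/t) * Real.sin (lam * t)) ∘
        (fun n : ℕ => (2*(n:ℝ)+1))) n) atTop (𝓝 (π/2 - 0)) :=
    tendsto_const_nhds.sub hRL
  rw [sub_zero] at h
  exact h.congr fun n => by
    simp only [Function.comp]
    rw [← Si_odd n]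

lemma tendsto_Si_atTop : Tendsto Si atTop (𝓝 (π/2)) := by
  rw [Metric.tendsto_atTop]
  intro δ hδ
  obtain ⟨N₁, hN₁⟩ := Metric.tendsto_atTop.mp tendsto_Si_odd (δ/2) (by linarith)
  set N₂ : ℕ := max N₁ (⌈4/δ⌉₊ + 1) with hN₂
  have hπ := Real.pi_pos
  refine ⟨(2*N₂+1) * (π/2) + π, fun T hT => ?_⟩
  have hceil : (4/δ : ℝ) ≤ (⌈4/δ⌉₊ : ℝ) := Nat.le_ceil _
  have hN₂ge : (⌈4/δ⌉₊ + 1 : ℕ) ≤ N₂ := le_max_right _ _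
  have hN₂ge' : (4/δ : ℝ) < N₂ := by
    have : ((⌈4/δ⌉₊ + 1 : ℕ) : ℝ) ≤ N₂ := Nat.cast_le.mpr hN₂ge
    push_cast at this
    linarith
  have hT0 : (0:ℝ) < T := lt_of_lt_of_le (by positivity) hT
  have harg : (N₂:ℝ) + 1 ≤ T/π - 1/2 := by
    rw [le_sub_iff_add_le, le_div_iff₀ hπ]
    calc ((N₂:ℝ) + 1 + 1/2) * π = (2*N₂+1) * (π/2) + π := by ring
      _ ≤ T := hT
  set n : ℕ := ⌊T/π - 1/2⌋₊ with hn
  have hargpos : (0:ℝ) ≤ T/π - 1/2 := by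
    have : (0:ℝ) ≤ (N₂:ℝ) + 1 := by positivity
    linarith
  have hn_ge : (N₂:ℝ) ≤ (n:ℝ) := by
    have : N₂ ≤ n := Nat.le_floor (by linarith)
    exact_mod_cast this
  have hnn : N₁ ≤ n := by
    have h1 : N₁ ≤ N₂ := le_max_left _ _
    have h2 : N₂ ≤ n := by exact_mod_cast hn_ge
    omega
  set tn : ℝ := (2*n+1) * (π/2) with htn
  have hfl := Nat.floor_le hargpos
  have h_tn_le : tn ≤ T := by
    have : (n:ℝ) * π + π/2 ≤ (T/π - 1/2) * π + π/2 := by nlinarith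
    calc tn = (n:ℝ) * π + π/2 := by ring
      _ ≤ (T/π - 1/2) * π + π/2 := this
      _ = T := by field_simp; ring
  have hfl2 : T/π - 1/2 < (n:ℝ) + 1 := Nat.lt_floor_add_one _
  have h_T_lt : T < tn + π := by
    have h1 : T/π < (n:ℝ) + 3/2 := by linarith
    have h2 : T < ((n:ℝ) + 3/2) * π := by
      rw [div_lt_iff₀ hπ] at h1; linarith
    calc T < ((n:ℝ) + 3/2) * π := h2
      _ = tn + π := by ring
  have h_tn_pos : (0:ℝ) < tn := by positivity
  have hbd : |Si T - Si tn| ≤ (1/tn) * |T - tn| := by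
    have hC : ∀ x ∈ Set.uIoc tn T, ‖sinc x‖ ≤ 1/tn := by
      intro x hx
      rw [Set.uIoc_of_le h_tn_le] at hx
      have hx0 : 0 < x := lt_trans h_tn_pos hx.1
      rw [Real.norm_eq_abs]
      unfold sinc
      rw [abs_div]
      apply div_le_div₀ zero_le_one (Real.abs_sin_le_one x) h_tn_pos
      rw [abs_of_pos hx0]
      exact hx.1.le
    have h := intervalIntegral.norm_integral_le_of_norm_le_const hC
    rw [integral_sinc_eq] at h
    simpa using h
  have hTtn : |T - tn| ≤ π := by
    rw [abs_of_nonneg (by linarith)]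
    linarith
  have hchain : |Si T - Si tn| ≤ π/tn := by
    calc |Si T - Si tn| ≤ (1/tn) * |T - tn| := hbd
      _ ≤ (1/tn) * π := by
          apply mul_le_mul_of_nonneg_left hTtn (by positivity)
      _ = π/tn := by ring
  have htn_ge : (2*(N₂:ℝ)+1) * (π/2) ≤ tn := by
    rw [htn]
    exact mul_le_mul_of_nonneg_right (by linarith) (by positivity)
  have hπtn : π/tn ≤ 2/(2*(N₂:ℝ)+1) := by
    rw [div_le_div_iff₀ h_tn_pos (by positivity)]
    have hmul : (2*(N₂:ℝ)+1)*π ≤ (2*(n:ℝ)+1)*π :=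
      mul_le_mul_of_nonneg_right (by linarith) hπ.le
    calc π*(2*(N₂:ℝ)+1) = (2*(N₂:ℝ)+1)*π := by ring
      _ ≤ (2*(n:ℝ)+1)*π := hmul
      _ = 2*tn := by rw [htn]; ring
  have hlt : 2/(2*(N₂:ℝ)+1) < δ/2 := by
    rw [div_lt_div_iff₀ (by positivity) (by norm_num)]
    have h4 : 4 < (N₂:ℝ) * δ := (div_lt_iff₀ hδ).mp hN₂ge'
    nlinarith
  have h3 := hN₁ n hnn
  have hdist1 : dist (Si T) (Si tn) < δ/2 := by
    rw [Real.dist_eq]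
    calc |Si T - Si tn| ≤ π/tn := hchain
      _ ≤ 2/(2*(N₂:ℝ)+1) := hπtn
      _ < δ/2 := hlt
  have htneq : Si tn = Si ((2*(n:ℝ)+1) * (π/2)) := by rw [htn]
  calc dist (Si T) (π/2) ≤ dist (Si T) (Si tn) + dist (Si tn) (π/2) := dist_triangle _ _ _
    _ < δ/2 + δ/2 := by
        apply add_lt_add hdist1
        rw [htneq]
        exact h3
    _ = δ := by ring

lemma tendsto_Si_atBot : Tendsto Si atBot (𝓝 (-(π/2))) := by
  have h1 : Tendsto (fun T : ℝ => -T) atBot atTop := tendsto_neg_atBot_atTop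
  have h2 := (tendsto_Si_atTop.comp h1).neg
  apply h2.congr
  intro T
  simp only [Function.comp]
  rw [← Si_neg, neg_neg]

/-- `HilbertTransformAt f y L` means the principal-value Hilbert transform
`(1/π) PV ∫ f(x)/(x - y) dx` exists at `y` and equals `L`. -/
def HilbertTransformAt (f : ℝ → ℝ) (y L : ℝ) : Prop :=
  Tendsto (fun ε : ℝ => (1 / Real.pi) * ∫ x in {x : ℝ | ε < |x - y|}, f x / (x - y))
    (𝓝[>] 0) (𝓝 L)

/-! main-theorem specific lemmas -/

lemma abs_sin_mul_div_le {m : ℝ} (hm : 0 < m) (z : ℝ) : |Real.sin (m*z)/z| ≤ m := by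
  rcases eq_or_ne z 0 with rfl | hz
  · simpa using hm.le
  · rw [abs_div, div_le_iff₀ (abs_pos.mpr hz)]
    calc |Real.sin (m*z)| ≤ |m*z| := Real.abs_sin_le_abs
      _ = m * |z| := by rw [abs_mul, abs_of_pos hm]

lemma F_bound {m : ℝ} (hm : 0 < m) (y u : ℝ) :
    |Real.sin (m*(u+y))/(u+y)/u| ≤ m / |u| := by
  rcases eq_or_ne u 0 with rfl | hu
  · simp
  · rw [abs_div]
    gcongr
    exact abs_sin_mul_div_le hm (u+y)

lemma measurable_F (m y : ℝ) : Measurable (fun u : ℝ => Real.sin (m*(u+y))/(u+y)/u) :=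
  ((Real.measurable_sin.comp (measurable_const.mul (measurable_id.add_const y))).div
    (measurable_id.add_const y)).div measurable_id

lemma F_integrableOn {m : ℝ} (hm : 0 < m) (y : ℝ) {ε : ℝ} (hε : 0 < ε) :
    IntegrableOn (fun u => Real.sin (m*(u+y))/(u+y)/u) {u : ℝ | ε < |u|} volume := by
  set K : ℝ := max (max ε (2*|y|)) 1 with hK
  have hK1 : (1:ℝ) ≤ K := le_max_right _ _
  have hKε : ε ≤ K := le_trans (le_max_left _ _) (le_max_left _ _)
  have hKy : 2*|y| ≤ K := le_trans (le_max_right _ _) (le_max_left _ _)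
  set C : ℝ := max ((m/ε) * (1+K^2)) 4 with hC
  have hC4 : (4:ℝ) ≤ C := le_max_right _ _
  have hCm : (m/ε) * (1+K^2) ≤ C := le_max_left _ _
  have hSmeas : MeasurableSet {u : ℝ | ε < |u|} :=
    measurableSet_lt measurable_const measurable_id.abs
  have hdom : Integrable (fun u : ℝ => C * (1/(1+u^2))) volume := by
    have := integrable_inv_one_add_sq.const_mul C
    simpa [one_div] using this
  apply Integrable.mono' hdom.integrableOn (measurable_F m y).aestronglyMeasurable
  rw [ae_restrict_iff' hSmeas]
  refine ae_of_all _ fun u hu => ?_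
  have hu : ε < |u| := hu
  have hu0 : u ≠ 0 := by
    intro h; rw [h, abs_zero] at hu; linarith
  rw [Real.norm_eq_abs]
  rcases le_or_gt |u| K with hcase | hcase
  · calc |Real.sin (m*(u+y))/(u+y)/u| ≤ m / |u| := F_bound hm y u
      _ ≤ m / ε := by gcongr
      _ ≤ C * (1/(1+u^2)) := by
          rw [mul_one_div, div_le_div_iff₀ hε (by positivity)]
          have hu2 : u^2 ≤ K^2 := by nlinarith [sq_abs u, abs_nonneg u]
          have hid : m/ε*(1+K^2)*ε = m*(1+K^2) := by field_simp
          nlinarith [mul_le_mul_of_nonneg_right hCm hε.le,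
            mul_le_mul_of_nonneg_left hu2 hm.le]
  · have hy2 : |y| ≤ K/2 := by linarith
    have htri : |u| ≤ |u+y| + |y| := by
      calc |u| = |(u+y) + (-y)| := by ring_nf
        _ ≤ |u+y| + |(-y)| := abs_add_le _ _
        _ = |u+y| + |y| := by rw [abs_neg]
    have habs : |u|/2 ≤ |u+y| := by linarith
    have hu1 : (1:ℝ) < |u| := lt_of_le_of_lt hK1 hcase
    calc |Real.sin (m*(u+y))/(u+y)/u| = |Real.sin (m*(u+y))| / (|u+y| * |u|) := by
          rw [abs_div, abs_div, div_div]
      _ ≤ 1 / ((|u|/2) * |u|) := by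
          apply div_le_div₀ zero_le_one (Real.abs_sin_le_one _) (by positivity)
          exact mul_le_mul_of_nonneg_right habs (abs_nonneg u)
      _ ≤ C * (1/(1+u^2)) := by
          rw [mul_one_div, div_le_div_iff₀ (by positivity) (by positivity)]
          nlinarith [sq_abs u, hC4]

lemma intervalIntegrable_sinc_comp {φ : ℝ → ℝ} (hφ : Measurable φ) (a b : ℝ) :
    IntervalIntegrable (fun u => sinc (φ u)) volume a b := by
  rw [intervalIntegrable_iff]
  apply Measure.integrableOn_of_bounded (M := 1)
  · rw [Set.uIoc]; exact measure_Ioc_lt_top.ne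
  · exact (measurable_sinc.comp hφ).aestronglyMeasurable
  · exact ae_of_all _ fun x => by simpa using abs_sinc_le_one (φ x)

lemma key_ident {m y u : ℝ} (hm : m ≠ 0) (hy : y ≠ 0) (hu : u ≠ 0)
    (h1 : u + y ≠ 0) (h2 : y - u ≠ 0) :
    Real.sin (m*(-u+y))/(-u+y)/(-u) + Real.sin (m*(u+y))/(u+y)/u
      = (m/y) * (2*Real.cos (m*y)*sinc (m*u) - sinc (m*(u+y)) - sinc (m*(y-u))) := by
  unfold sinc
  have h2' : -u + y ≠ 0 := by rw [neg_add_eq_sub]; exact h2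
  have e1 : m*(u+y) = m*u + m*y := by ring
  have e2 : m*(-u+y) = m*y - m*u := by ring
  have e3 : m*(y-u) = m*y - m*u := by ring
  rw [e1, e2, e3, Real.sin_add, Real.sin_sub]
  have hmu : m*u ≠ 0 := mul_ne_zero hm hu
  have hmuy : m*u + m*y ≠ 0 := by
    have h : m*u + m*y = m*(u+y) := by ring
    rw [h]; exact mul_ne_zero hm h1
  have hmyu : m*y - m*u ≠ 0 := by
    have h : m*y - m*u = m*(y-u) := by ring
    rw [h]; exact mul_ne_zero hm h2
  field_simp
  ring

lemma translate_integral (g : ℝ → ℝ) (y ε : ℝ) :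
    ∫ x in {x : ℝ | ε < |x - y|}, g x = ∫ u in {u : ℝ | ε < |u|}, g (u + y) := by
  have hA : MeasurableSet {x : ℝ | ε < |x - y|} :=
    measurableSet_lt measurable_const (measurable_id.sub_const y).abs
  have hB : MeasurableSet {u : ℝ | ε < |u|} :=
    measurableSet_lt measurable_const measurable_id.abs
  rw [← MeasureTheory.integral_indicator hA, ← MeasureTheory.integral_indicator hB,
    ← integral_add_right_eq_self (fun x => ({x : ℝ | ε < |x - y|}).indicator g x) y]
  congr 1
  funext u
  simp only [Set.indicator_apply, mem_setOf_eq, add_sub_cancel_right]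

lemma integral_eval {m : ℝ} (hm : 0 < m) {y : ℝ} (hy : y ≠ 0) {ε : ℝ} (hε : 0 < ε) :
    ∫ u in {u : ℝ | ε < |u|}, Real.sin (m*(u+y))/(u+y)/u
      = (1/y) * (2*Real.cos (m*y)*(π/2 - Si (m*ε)) - (π/2 - Si (m*(ε+y)))
          - (Si (m*(y-ε)) - (-(π/2)))) := by
  set F : ℝ → ℝ := fun u => Real.sin (m*(u+y))/(u+y)/u with hF
  set s : ℕ → Set ℝ := fun n => Ioo (-(n:ℝ)) (-ε) ∪ Ioo ε n with hs
  have hsm : ∀ n, MeasurableSet (s n) := fun n => measurableSet_Ioo.union measurableSet_Ioo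
  have hmono : Monotone s := by
    intro a b hab
    apply union_subset_union
    · exact Ioo_subset_Ioo (neg_le_neg (by exact_mod_cast hab)) le_rfl
    · exact Ioo_subset_Ioo le_rfl (by exact_mod_cast hab)
  have hsub : ∀ n, s n ⊆ {u : ℝ | ε < |u|} := by
    intro n u hu
    rcases hu with h | h
    · obtain ⟨h1, h2⟩ := h
      rw [mem_setOf_eq, abs_of_neg (by linarith)]
      linarith
    · obtain ⟨h1, h2⟩ := h
      rw [mem_setOf_eq, abs_of_pos (by linarith)]
      exact h1
  have hunion : ⋃ n, s n = {u : ℝ | ε < |u|} := by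
    apply subset_antisymm
    · exact iUnion_subset hsub
    · intro u hu
      rw [mem_setOf_eq] at hu
      obtain ⟨n, hn⟩ := exists_nat_gt |u|
      rw [mem_iUnion]
      refine ⟨n, ?_⟩
      rcases lt_abs.mp hu with h | h
      · right
        exact ⟨h, lt_of_le_of_lt (le_abs_self u) hn⟩
      · left
        refine ⟨?_, by linarith⟩
        have := lt_of_le_of_lt (neg_le_abs u) hn
        linarith
  have hFi : IntegrableOn F {u | ε < |u|} volume := F_integrableOn hm y hε
  have htend := tendsto_setIntegral_of_monotone hsm hmono (hunion ▸ hFi)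
  rw [hunion] at htend
  set Φ : ℕ → ℝ := fun n => (1/y) * (2*Real.cos (m*y)*(Si (m*(n:ℝ)) - Si (m*ε))
      - (Si (m*((n:ℝ)+y)) - Si (m*(ε+y))) - (Si (m*(y-ε)) - Si (m*(y-(n:ℝ))))) with hΦdef
  have heval : ∀ᶠ n : ℕ in atTop, ∫ u in s n, F u = Φ n := by
    have hev : ∀ᶠ n : ℕ in atTop, ε ≤ (n:ℝ) := by
      obtain ⟨N, hN⟩ := exists_nat_gt ε
      filter_upwards [eventually_ge_atTop N] with n hn
      calc ε ≤ (N:ℝ) := hN.le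
        _ ≤ (n:ℝ) := by exact_mod_cast hn
    filter_upwards [hev] with n hn
    have hdisj : Disjoint (Ioo (-(n:ℝ)) (-ε)) (Ioo ε (n:ℝ)) := by
      rw [Set.disjoint_left]
      rintro u ⟨_, h2⟩ ⟨h3, _⟩
      linarith
    have hi1 : IntegrableOn F (Ioo (-(n:ℝ)) (-ε)) volume :=
      hFi.mono_set fun u hu => hsub n (Or.inl hu)
    have hi2 : IntegrableOn F (Ioo ε (n:ℝ)) volume :=
      hFi.mono_set fun u hu => hsub n (Or.inr hu)
    rw [show s n = Ioo (-(n:ℝ)) (-ε) ∪ Ioo ε (n:ℝ) from rfl,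
      setIntegral_union hdisj measurableSet_Ioo hi1 hi2]
    have e1 : ∫ u in Ioo (-(n:ℝ)) (-ε), F u = ∫ u in (-(n:ℝ))..(-ε), F u := by
      rw [intervalIntegral.integral_of_le (by linarith), integral_Ioc_eq_integral_Ioo]
    have e2 : ∫ u in Ioo ε (n:ℝ), F u = ∫ u in ε..(n:ℝ), F u := by
      rw [intervalIntegral.integral_of_le (by linarith), integral_Ioc_eq_integral_Ioo]
    rw [e1, e2, ← intervalIntegral.integral_comp_neg fun u => F u]
    have hIF : IntervalIntegrable F volume ε (n:ℝ) := by
      rw [intervalIntegrable_iff]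
      apply Measure.integrableOn_of_bounded (M := m/ε)
      · rw [Set.uIoc]; exact measure_Ioc_lt_top.ne
      · exact (measurable_F m y).aestronglyMeasurable
      · rw [Set.uIoc_of_le hn]
        rw [ae_restrict_iff' measurableSet_Ioc]
        refine ae_of_all _ fun u hu => ?_
        have hupos : 0 < u := lt_trans hε hu.1
        rw [Real.norm_eq_abs]
        calc |F u| ≤ m / |u| := F_bound hm y u
          _ ≤ m / ε := by rw [abs_of_pos hupos]; gcongr; exact hu.1.le
    have hIFneg : IntervalIntegrable (fun u => F (-u)) volume ε (n:ℝ) := by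
      rw [intervalIntegrable_iff]
      apply Measure.integrableOn_of_bounded (M := m/ε)
      · rw [Set.uIoc]; exact measure_Ioc_lt_top.ne
      · exact ((measurable_F m y).comp measurable_neg).aestronglyMeasurable
      · rw [Set.uIoc_of_le hn]
        rw [ae_restrict_iff' measurableSet_Ioc]
        refine ae_of_all _ fun u hu => ?_
        have hupos : 0 < u := lt_trans hε hu.1
        rw [Real.norm_eq_abs]
        calc |F (-u)| ≤ m / |(-u)| := F_bound hm y (-u)
          _ = m / |u| := by rw [abs_neg]
          _ ≤ m / ε := by rw [abs_of_pos hupos]; gcongr; exact hu.1.le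
    rw [← intervalIntegral.integral_add hIFneg hIF]
    have hcongr : ∫ u in ε..(n:ℝ), (F (-u) + F u)
        = ∫ u in ε..(n:ℝ), (m/y) * (2*Real.cos (m*y)*sinc (m*u)
            - sinc (m*(u+y)) - sinc (m*(y-u))) := by
      apply intervalIntegral.integral_congr_ae
      have hmz : volume ({y, -y} : Set ℝ) = 0 := (Set.toFinite _).measure_zero volume
      have hae : ∀ᵐ u : ℝ, u ∉ ({y, -y} : Set ℝ) := measure_eq_zero_iff_ae_notMem.mp hmz
      filter_upwards [hae] with u hu hmem
      rw [Set.uIoc_of_le hn] at hmem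
      have hu0 : u ≠ 0 := ne_of_gt (lt_trans hε hmem.1)
      simp only [Set.mem_insert_iff, Set.mem_singleton_iff, not_or] at hu
      have h1 : u + y ≠ 0 := by
        intro h
        exact hu.2 (by linarith)
      have h2 : y - u ≠ 0 := by
        intro h
        exact hu.1 (by linarith)
      simp only [hF]
      exact key_ident hm.ne' hy hu0 h1 h2
    rw [hcongr, intervalIntegral.integral_const_mul]
    have hI1 : IntervalIntegrable (fun u => sinc (m*u)) volume ε (n:ℝ) :=
      intervalIntegrable_sinc_comp (measurable_const.mul measurable_id) _ _
    have hI2 : IntervalIntegrable (fun u => sinc (m*(u+y))) volume ε (n:ℝ) :=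
      intervalIntegrable_sinc_comp (measurable_const.mul (measurable_id.add_const y)) _ _
    have hI3 : IntervalIntegrable (fun u => sinc (m*(y-u))) volume ε (n:ℝ) :=
      intervalIntegrable_sinc_comp (measurable_const.mul (measurable_const.sub measurable_id)) _ _
    rw [intervalIntegral.integral_sub ((hI1.const_mul (2*Real.cos (m*y))).sub hI2) hI3,
      intervalIntegral.integral_sub (hI1.const_mul (2*Real.cos (m*y))) hI2,
      intervalIntegral.integral_const_mul]
    have A1 : ∫ u in ε..(n:ℝ), sinc (m*u) = m⁻¹ * (Si (m*(n:ℝ)) - Si (m*ε)) := by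
      rw [intervalIntegral.integral_comp_mul_left sinc hm.ne', smul_eq_mul, integral_sinc_eq]
    have A2 : ∫ u in ε..(n:ℝ), sinc (m*(u+y)) = m⁻¹ * (Si (m*((n:ℝ)+y)) - Si (m*(ε+y))) := by
      have h := intervalIntegral.integral_comp_add_right (a := ε) (b := (n:ℝ))
        (fun v => sinc (m*v)) y
      rw [h, intervalIntegral.integral_comp_mul_left sinc hm.ne', smul_eq_mul, integral_sinc_eq]
    have A3 : ∫ u in ε..(n:ℝ), sinc (m*(y-u)) = m⁻¹ * (Si (m*(y-ε)) - Si (m*(y-(n:ℝ)))) := by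
      have h := intervalIntegral.integral_comp_sub_left (a := ε) (b := (n:ℝ))
        (fun v => sinc (m*v)) y
      rw [h, intervalIntegral.integral_comp_mul_left sinc hm.ne', smul_eq_mul, integral_sinc_eq]
    rw [A1, A2, A3, hΦdef]
    field_simp
  have hA : Tendsto (fun n : ℕ => Si (m*(n:ℝ))) atTop (𝓝 (π/2)) :=
    tendsto_Si_atTop.comp (tendsto_natCast_atTop_atTop.const_mul_atTop hm)
  have hB : Tendsto (fun n : ℕ => Si (m*((n:ℝ)+y))) atTop (𝓝 (π/2)) :=
    tendsto_Si_atTop.comp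
      ((tendsto_atTop_add_const_right atTop y tendsto_natCast_atTop_atTop).const_mul_atTop hm)
  have hC : Tendsto (fun n : ℕ => Si (m*(y-(n:ℝ)))) atTop (𝓝 (-(π/2))) := by
    apply tendsto_Si_atBot.comp
    apply Tendsto.const_mul_atBot hm
    have h1 : Tendsto (fun n : ℕ => -(n:ℝ)) atTop atBot :=
      tendsto_neg_atTop_atBot.comp tendsto_natCast_atTop_atTop
    have h2 := tendsto_atBot_add_const_left atTop y h1
    exact h2.congr fun n => by ring
  have hΦlim : Tendsto Φ atTop (𝓝 ((1/y) * (2*Real.cos (m*y)*(π/2 - Si (m*ε))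
      - (π/2 - Si (m*(ε+y))) - (Si (m*(y-ε)) - (-(π/2)))))) := by
    apply Tendsto.const_mul
    exact (((hA.sub tendsto_const_nhds).const_mul _).sub
      (hB.sub tendsto_const_nhds)).sub (tendsto_const_nhds.sub hC)
  exact tendsto_nhds_unique (htend.congr' heval) hΦlim

/-- For `m > 0`, the Hilbert transform of `x ↦ sin(mx)/x` is `y ↦ (cos(my) − 1)/y`. -/
theorem hilbert_sin_div (m : ℝ) (hm : 0 < m) (y : ℝ) :
    HilbertTransformAt (fun x : ℝ => Real.sin (m * x) / x) y
      ((Real.cos (m * y) - 1) / y) := by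
  unfold HilbertTransformAt
  rcases eq_or_ne y 0 with rfl | hy
  · -- y = 0 : the integrand is odd, so every integral vanishes
    have hzero : ∀ ε : ℝ,
        ∫ x in {x : ℝ | ε < |x - 0|}, (fun x : ℝ => Real.sin (m*x)/x) x / (x - 0) = 0 := by
      intro ε
      have hS : MeasurableSet {x : ℝ | ε < |x - 0|} :=
        measurableSet_lt measurable_const (measurable_id.sub_const 0).abs
      rw [← MeasureTheory.integral_indicator hS]
      set G : ℝ → ℝ :=
        fun x => ({x : ℝ | ε < |x - 0|}).indicator (fun x => Real.sin (m*x)/x/(x-0)) x with hG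
      have hodd : ∀ x, G (-x) = - G x := by
        intro x
        rw [hG]
        simp only [Set.indicator_apply, mem_setOf_eq, sub_zero, abs_neg]
        by_cases h : ε < |x|
        · simp only [h, if_true]
          rw [mul_neg, Real.sin_neg]
          rw [neg_div_neg_eq, div_neg]
        · simp [h]
      have h1 : ∫ x : ℝ, G (-x) = ∫ x : ℝ, G x := integral_neg_eq_self G volume
      have h2 : ∫ x : ℝ, G (-x) = - ∫ x : ℝ, G x := by
        rw [show (fun x : ℝ => G (-x)) = fun x => - G x from funext hodd,
          MeasureTheory.integral_neg]
      have : ∫ x : ℝ, G x = 0 := by linarith [h1.symm.trans h2]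
      exact this
    have hval : (Real.cos (m * 0) - 1) / 0 = 0 := by simp
    rw [hval]
    have : (fun ε : ℝ => (1 / Real.pi) *
        ∫ x in {x : ℝ | ε < |x - 0|}, (fun x : ℝ => Real.sin (m*x)/x) x / (x - 0))
        = fun _ : ℝ => 0 := by
      funext ε
      rw [hzero ε, mul_zero]
    rw [this]
    exact tendsto_const_nhds
  · -- y ≠ 0
    have hπ : Real.pi ≠ 0 := Real.pi_ne_zero
    set Ψ : ℝ → ℝ := fun ε => (1/Real.pi) * ((1/y) * (2*Real.cos (m*y)*(π/2 - Si (m*ε))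
        - (π/2 - Si (m*(ε+y))) - (Si (m*(y-ε)) - (-(π/2))))) with hΨ
    have hΨcont : Continuous Ψ := by
      apply continuous_const.mul
      apply continuous_const.mul
      apply Continuous.sub
      apply Continuous.sub
      · exact continuous_const.mul
          (continuous_const.sub (continuous_Si.comp (continuous_const.mul continuous_id)))
      · exact continuous_const.sub
          (continuous_Si.comp (continuous_const.mul (continuous_id.add continuous_const)))
      · exact (continuous_Si.comp
          (continuous_const.mul (continuous_const.sub continuous_id))).sub continuous_const
    have hΨ0 : Ψ 0 = (Real.cos (m * y) - 1) / y := by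
      rw [hΨ]
      simp only [mul_zero, add_zero, zero_add, sub_zero, Si_zero]
      field_simp
      ring
    have htendΨ : Tendsto Ψ (𝓝[>] 0) (𝓝 ((Real.cos (m * y) - 1) / y)) := by
      rw [← hΨ0]
      exact (hΨcont.tendsto 0).mono_left nhdsWithin_le_nhds
    apply htendΨ.congr'
    filter_upwards [self_mem_nhdsWithin] with ε (hε : ε ∈ Ioi (0:ℝ))
    have hε : 0 < ε := hε
    simp only [hΨ]
    congr 1
    rw [← integral_eval hm hy hε, translate_integral (fun x => Real.sin (m*x)/x/(x-y)) y ε]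
    apply setIntegral_congr_fun (measurableSet_lt measurable_const measurable_id.abs)
    intro u _
    simp only [add_sub_cancel_right]
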